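/- The centralizer algebra of the image of the local group GL_d = GL(V₁)×⋯×GL(Vₙ) acting on V^{⊗m} = (V₁⊗⋯⊗Vₙ)^{⊗m} by μ(g₁,…,gₙ)(⊗ᵢ⊗ⱼ v_{ij}) = ⊗ᵢ⊗ⱼ gᵢ v_{ij} equals the linear span of the image of (S_m)ⁿ acting by ρ(σ₁,…,σₙ)(⊗ᵢ⊗ⱼ v_{ij}) = ⊗ᵢ⊗ⱼ v_{i σᵢ⁻¹(j)}. -/

import Mathlib

open scoped Classical

/-- The matrix of `μ(g₁,…,gₙ)` acting on `V^{⊗m} = (V₁⊗⋯⊗Vₙ)^{⊗m}`, whose basis is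
indexed by `κ = Fin m → ∀ i, Fin (d i)`: `μ(g)(⊗ᵢ⊗ⱼ v_{ij}) = ⊗ᵢ⊗ⱼ gᵢ v_{ij}`. -/
noncomputable def muMat {k : Type*} [Field k] {n m : ℕ} {d : Fin n → ℕ}
    (g : ∀ i, Matrix (Fin (d i)) (Fin (d i)) k) :
    Matrix (Fin m → ∀ i, Fin (d i)) (Fin m → ∀ i, Fin (d i)) k :=
  fun a b => ∏ j, ∏ i, g i (a j i) (b j i)

/-- The matrix of `ρ(σ₁,…,σₙ)` acting on `V^{⊗m}` by permuting, for each `i`, the `m`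
tensor slots of the `i`-th factor: `ρ(σ)(⊗ᵢ⊗ⱼ v_{ij}) = ⊗ᵢ⊗ⱼ v_{i σᵢ⁻¹(j)}`. -/
noncomputable def rhoMat {k : Type*} [Field k] {n m : ℕ} {d : Fin n → ℕ}
    (σ : Fin n → Equiv.Perm (Fin m)) :
    Matrix (Fin m → ∀ i, Fin (d i)) (Fin m → ∀ i, Fin (d i)) k :=
  fun b a => if ∀ j i, b j i = a ((σ i)⁻¹ j) i then 1 else 0


section SW

variable {k : Type*} [Field k] {n m : ℕ} {d : Fin n → ℕ}

def Tmap (σ : Fin n → Equiv.Perm (Fin m)) (a : Fin m → ∀ i, Fin (d i)) :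
    Fin m → ∀ i, Fin (d i) := fun j i => a ((σ i)⁻¹ j) i

lemma Tmap_mul (σ τ : Fin n → Equiv.Perm (Fin m)) (a : Fin m → ∀ i, Fin (d i)) :
    Tmap σ (Tmap τ a) = Tmap (σ * τ) a := by
  funext j i; simp [Tmap, Pi.mul_apply, Equiv.Perm.mul_apply]

lemma Tmap_one (a : Fin m → ∀ i, Fin (d i)) : Tmap (d := d) 1 a = a := by
  funext j i; simp [Tmap]

lemma Tmap_inv_self (σ : Fin n → Equiv.Perm (Fin m)) (a : Fin m → ∀ i, Fin (d i)) :
    Tmap σ⁻¹ (Tmap σ a) = a := by rw [Tmap_mul, inv_mul_cancel, Tmap_one]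

lemma Tmap_self_inv (σ : Fin n → Equiv.Perm (Fin m)) (a : Fin m → ∀ i, Fin (d i)) :
    Tmap σ (Tmap σ⁻¹ a) = a := by rw [Tmap_mul, mul_inv_cancel, Tmap_one]

lemma muMat_Tmap (g : ∀ i, Matrix (Fin (d i)) (Fin (d i)) k)
    (σ : Fin n → Equiv.Perm (Fin m)) (a b : Fin m → ∀ i, Fin (d i)) :
    muMat g (Tmap σ a) (Tmap σ b) = muMat g a b := by
  unfold muMat Tmap
  rw [Finset.prod_comm, Finset.prod_comm (s := Finset.univ (α := Fin m))]
  refine Finset.prod_congr rfl fun i _ => ?_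
  exact Equiv.prod_comp (σ i)⁻¹ (fun j => g i (a j i) (b j i))

def Tequiv (σ : Fin n → Equiv.Perm (Fin m)) :
    (Fin m → ∀ i, Fin (d i)) ≃ (Fin m → ∀ i, Fin (d i)) :=
  ⟨Tmap σ, Tmap σ⁻¹, Tmap_inv_self σ, Tmap_self_inv σ⟩

lemma sum_Tmap_pair (σ : Fin n → Equiv.Perm (Fin m))
    (F : (Fin m → ∀ i, Fin (d i)) → (Fin m → ∀ i, Fin (d i)) → k) :
    (∑ a, ∑ b, F (Tmap σ a) (Tmap σ b)) = ∑ a, ∑ b, F a b := by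
  calc (∑ a, ∑ b, F (Tmap σ a) (Tmap σ b)) = ∑ a, ∑ b, F (Tmap σ a) b :=
        Finset.sum_congr rfl fun a _ => Equiv.sum_comp (Tequiv σ) (F (Tmap σ a))
    _ = ∑ a, ∑ b, F a b := Equiv.sum_comp (Tequiv σ) (fun a => ∑ b, F a b)

lemma prod_count {β γ : Type*} [Fintype β] [Fintype γ] (w : β → γ) (x : γ → k) :
    ∏ s, x (w s) = ∏ z, x z ^ (Nat.card {s // w s = z}) := by
  rw [← Finset.prod_fiberwise_of_maps_to (g := w) (t := Finset.univ)
    (fun i _ => Finset.mem_univ _) (fun s => x (w s))]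
  refine Finset.prod_congr rfl fun z _ => ?_
  rw [Finset.prod_congr rfl (fun s hs => by rw [(Finset.mem_filter.mp hs).2] :
    ∀ s ∈ Finset.univ.filter fun s => w s = z, x (w s) = x z), Finset.prod_const]
  congr 1
  rw [Nat.card_eq_fintype_card, Fintype.card_subtype]

lemma exists_equiv_of_card_fibers_eq {β γ : Type*} [Fintype β] [Fintype γ]
    (F G : β → γ) (h : ∀ z, Nat.card {s // F s = z} = Nat.card {s // G s = z}) :
    ∃ e : Equiv.Perm β, ∀ s, F (e s) = G s := by
  have h' : ∀ z, Fintype.card {s // F s = z} = Fintype.card {s // G s = z} := by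
    intro z
    rw [← Nat.card_eq_fintype_card, ← Nat.card_eq_fintype_card]
    exact h z
  exact ⟨Equiv.ofFiberEquiv (f := G) (g := F) (fun z => (Fintype.equivOfCardEq (h' z)).symm),
    fun s => Equiv.ofFiberEquiv_map _ s⟩

/-- exponent (multidegree) attached to a pair of indices -/
noncomputable def expo (a b : Fin m → ∀ i, Fin (d i)) :
    ((i : Fin n) × (Fin (d i) × Fin (d i))) →₀ ℕ :=
  Finsupp.equivFunOnFinite.symm fun z =>
    Nat.card {j : Fin m // (a j z.1, b j z.1) = z.2}

lemma expo_apply (a b : Fin m → ∀ i, Fin (d i)) (z : (i : Fin n) × (Fin (d i) × Fin (d i))) :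
    expo a b z = Nat.card {j : Fin m // (a j z.1, b j z.1) = z.2} := rfl

lemma muMat_eq_prod_pow (x : ((i : Fin n) × (Fin (d i) × Fin (d i))) → k)
    (a b : Fin m → ∀ i, Fin (d i)) :
    muMat (fun i => Matrix.of fun p q => x ⟨i, (p, q)⟩) a b
      = ∏ z, x z ^ (expo a b z) := by
  have lhs : muMat (fun i => Matrix.of fun p q => x ⟨i, (p, q)⟩) a b
      = ∏ i, ∏ j, x ⟨i, (a j i, b j i)⟩ := by
    unfold muMat
    rw [Finset.prod_comm]
    rfl
  rw [lhs, ← Finset.univ_sigma_univ, Finset.prod_sigma]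
  refine Finset.prod_congr rfl fun i _ => ?_
  rw [prod_count (fun j => (a j i, b j i)) (fun w => x ⟨i, w⟩)]
  exact Finset.prod_congr rfl fun w _ => rfl


lemma rhoMat_apply (σ : Fin n → Equiv.Perm (Fin m)) (b a : Fin m → ∀ i, Fin (d i)) :
    rhoMat (k := k) σ b a = if b = Tmap σ a then 1 else 0 := by
  unfold rhoMat
  congr 1
  simp only [eq_iff_iff]
  constructor
  · intro h; funext j i; exact h j i
  · intro h j i; exact congrFun (congrFun h j) i

lemma rhoMat_one : rhoMat (k := k) (d := d) (m := m) 1 = 1 := by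
  ext b a
  rw [rhoMat_apply, Tmap_one, Matrix.one_apply]

lemma rhoMat_mul_apply (σ : Fin n → Equiv.Perm (Fin m))
    (Y : Matrix (Fin m → ∀ i, Fin (d i)) (Fin m → ∀ i, Fin (d i)) k)
    (b a : Fin m → ∀ i, Fin (d i)) :
    (rhoMat (k := k) (d := d) σ * Y) b a = Y (Tmap σ⁻¹ b) a := by
  rw [Matrix.mul_apply]
  have : ∀ c, rhoMat (k := k) σ b c = if c = Tmap σ⁻¹ b then 1 else 0 := by
    intro c
    rw [rhoMat_apply]
    congr 1
    simp only [eq_iff_iff]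
    constructor
    · rintro rfl; rw [Tmap_inv_self]
    · rintro rfl; rw [Tmap_self_inv]
  simp only [this, ite_mul, one_mul, zero_mul]
  rw [Finset.sum_ite_eq' Finset.univ (Tmap σ⁻¹ b) (fun c => Y c a)]
  simp

lemma mul_rhoMat_apply (σ : Fin n → Equiv.Perm (Fin m))
    (Y : Matrix (Fin m → ∀ i, Fin (d i)) (Fin m → ∀ i, Fin (d i)) k)
    (b a : Fin m → ∀ i, Fin (d i)) :
    (Y * rhoMat (k := k) (d := d) σ) b a = Y b (Tmap σ a) := by
  rw [Matrix.mul_apply]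
  simp only [rhoMat_apply, mul_ite, mul_one, mul_zero]
  have : ∀ c, (if (c : Fin m → ∀ i, Fin (d i)) = Tmap σ a then Y b c else 0)
      = if c = Tmap σ a then Y b (Tmap σ a) else 0 := by
    intro c; split <;> simp_all
  simp only [this]
  rw [Finset.sum_ite_eq' Finset.univ (Tmap σ a) (fun _ => Y b (Tmap σ a))]
  simp

lemma rho_mul_mu (σ : Fin n → Equiv.Perm (Fin m)) (g : ∀ i, Matrix (Fin (d i)) (Fin (d i)) k) :
    rhoMat σ * muMat g = muMat g * rhoMat σ := by
  ext b a
  rw [rhoMat_mul_apply, mul_rhoMat_apply]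
  calc muMat g (Tmap σ⁻¹ b) a = muMat g (Tmap σ (Tmap σ⁻¹ b)) (Tmap σ a) := (muMat_Tmap _ _ _ _).symm
    _ = muMat g b (Tmap σ a) := by rw [Tmap_self_inv]


end SW

section Lag

open Polynomial

variable {k : Type*} [Field k] [CharZero k] {n m : ℕ} {d : Fin n → ℕ}

/-- Every `muMat g` is a linear combination of `muMat` of unit tuples. -/
lemma muMat_mem_span_units (g : ∀ i, Matrix (Fin (d i)) (Fin (d i)) k) :
    ∃ (s : Finset k) (c : k → k), (∀ t ∈ s, ∀ i, IsUnit (g i + t • 1)) ∧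
      muMat (m := m) g = ∑ t ∈ s, c t • muMat (fun i => g i + t • 1) := by
  have hinf : Infinite k := inferInstance
  -- the bad polynomial
  set badp : k[X] := ∏ i, Matrix.charpoly (-(g i)) with hbadp
  have hbadmonic : badp.Monic := monic_prod_of_monic _ _ fun i _ => (-(g i)).charpoly_monic
  have hbadne : badp ≠ 0 := hbadmonic.ne_zero
  -- choose nodes avoiding roots
  have hcompl : ((badp.roots.toFinset : Set k))ᶜ.Infinite :=
    Set.Finite.infinite_compl (Finset.finite_toSet _)
  obtain ⟨s, hs_sub, hs_card⟩ := hcompl.exists_subset_card_eq (n * m + 1)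
  -- units at each node
  have hdet : ∀ (i : Fin n) (t : k),
      (g i + t • 1).det = (Matrix.charpoly (-(g i))).eval t := by
    intro i t
    have : Matrix.charmatrix (-(g i)) =
        (Matrix.diagonal fun _ => (X : k[X])) + (g i).map C := by
      unfold Matrix.charmatrix
      ext p q
      by_cases h : p = q <;>
        simp [h, Matrix.sub_apply, Matrix.add_apply, Matrix.diagonal_apply, Matrix.map_apply]
    have h2 : ((Matrix.charmatrix (-(g i))).map (Polynomial.evalRingHom t)) = g i + t • 1 := by
      rw [this]
      ext p q
      by_cases h : p = q <;>
        simp [h, Matrix.add_apply, Matrix.diagonal_apply, Matrix.map_apply, Matrix.one_apply,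
          Matrix.smul_apply, add_comm]
    have h3 := RingHom.map_det (Polynomial.evalRingHom t) (Matrix.charmatrix (-(g i)))
    rw [RingHom.mapMatrix_apply] at h3
    rw [Matrix.charpoly, ← h2, ← h3]
    rfl
  have hunit : ∀ t ∈ s, ∀ i, IsUnit (g i + t • 1) := by
    intro t ht i
    rw [Matrix.isUnit_iff_isUnit_det, isUnit_iff_ne_zero, hdet]
    intro h0
    have : t ∈ (badp.roots.toFinset : Set k) := by
      simp only [Multiset.mem_toFinset, Finset.coe_sort_coe, Finset.mem_coe]
      rw [Polynomial.mem_roots hbadne, Polynomial.IsRoot, hbadp, Polynomial.eval_prod]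
      exact Finset.prod_eq_zero (Finset.mem_univ i) h0
    exact (hs_sub ht) this
  -- the entry polynomials
  set P : (Fin m → ∀ i, Fin (d i)) → (Fin m → ∀ i, Fin (d i)) → k[X] := fun a b =>
    ∏ j, ∏ i, (C (g i (a j i) (b j i)) +
      X * C ((1 : Matrix (Fin (d i)) (Fin (d i)) k) (a j i) (b j i))) with hP
  have hPdeg : ∀ a b, (P a b).degree < (s.card : ℕ) := by
    intro a b
    have h1 : (P a b).natDegree ≤ n * m := by
      rw [hP]
      refine le_trans (Polynomial.natDegree_prod_le _ _) ?_
      have : ∀ j : Fin m, (∏ i, (C (g i (a j i) (b j i)) +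
          X * C ((1 : Matrix (Fin (d i)) (Fin (d i)) k) (a j i) (b j i)))).natDegree ≤ n := by
        intro j
        refine le_trans (Polynomial.natDegree_prod_le _ _) ?_
        have : ∀ i : Fin n, (C (g i (a j i) (b j i)) +
            X * C ((1 : Matrix (Fin (d i)) (Fin (d i)) k) (a j i) (b j i))).natDegree ≤ 1 := by
          intro i
          refine le_trans (Polynomial.natDegree_add_le _ _) (max_le (by simp) ?_)
          refine le_trans (Polynomial.natDegree_mul_le) (by simp)
        refine le_trans (Finset.sum_le_sum (g := fun _ => 1) fun i _ => this i) (by simp)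
      refine le_trans (Finset.sum_le_sum (g := fun _ => n) fun j _ => this j)
        (by simp [mul_comm])
    calc (P a b).degree ≤ ((P a b).natDegree : WithBot ℕ) := Polynomial.degree_le_natDegree
      _ < (s.card : ℕ) := by
          rw [hs_card]
          exact_mod_cast Nat.lt_succ_of_le h1
  have hPeval : ∀ (t : k) a b, (P a b).eval t = muMat (fun i => g i + t • 1) a b := by
    intro t a b
    rw [hP]
    simp only [muMat, Polynomial.eval_prod, Polynomial.eval_add, Polynomial.eval_mul,
      Polynomial.eval_C, Polynomial.eval_X, Matrix.add_apply, Matrix.smul_apply, smul_eq_mul]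
  have hPeval0 : ∀ a b, (P a b).eval 0 = muMat (m := m) g a b := by
    intro a b
    rw [hP]
    simp only [muMat, Polynomial.eval_prod, Polynomial.eval_add, Polynomial.eval_mul,
      Polynomial.eval_C, Polynomial.eval_X, zero_mul, add_zero]
  refine ⟨s, fun t => (Lagrange.basis s id t).eval 0, hunit, ?_⟩
  ext a b
  rw [← hPeval0 a b]
  have hinj : Set.InjOn (id : k → k) s := Function.injective_id.injOn
  have := Lagrange.eq_interpolate (v := id) hinj (hPdeg a b)
  conv_lhs => rw [this]
  rw [Lagrange.interpolate_apply, Polynomial.eval_finset_sum]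
  rw [Matrix.sum_apply]
  refine Finset.sum_congr rfl fun t ht => ?_
  rw [Polynomial.eval_mul, Polynomial.eval_C, Matrix.smul_apply, hPeval, smul_eq_mul, id,
    mul_comm]

lemma commute_muMat_of_units {X : Matrix (Fin m → ∀ i, Fin (d i)) (Fin m → ∀ i, Fin (d i)) k}
    (H : ∀ g : ∀ i, Matrix (Fin (d i)) (Fin (d i)) k, (∀ i, IsUnit (g i)) →
      X * muMat g = muMat g * X)
    (g : ∀ i, Matrix (Fin (d i)) (Fin (d i)) k) : X * muMat g = muMat g * X := by
  obtain ⟨s, c, hunit, hrep⟩ := muMat_mem_span_units (m := m) g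
  rw [hrep, Finset.mul_sum, Finset.sum_mul]
  refine Finset.sum_congr rfl fun t ht => ?_
  rw [Matrix.mul_smul, Matrix.smul_mul, H _ (hunit t ht)]

end Lag

section Main

variable {k : Type*} [Field k] [CharZero k] {n m : ℕ} {d : Fin n → ℕ}

lemma triple_swap {α β γ : Type*} [Fintype α] [Fintype β] [Fintype γ] (F : α → β → γ → k) :
    (∑ a, ∑ b, ∑ g, F a b g) = ∑ g, ∑ a, ∑ b, F a b g :=
  calc (∑ a, ∑ b, ∑ g, F a b g) = ∑ a, ∑ g, ∑ b, F a b g :=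
        Finset.sum_congr rfl fun a _ => Finset.sum_comm
    _ = ∑ g, ∑ a, ∑ b, F a b g := Finset.sum_comm

set_option maxHeartbeats 1000000 in
lemma inv_apply_eq_zero
    (f : Matrix (Fin m → ∀ i, Fin (d i)) (Fin m → ∀ i, Fin (d i)) k →ₗ[k] k)
    (hf : ∀ g : ∀ i, Matrix (Fin (d i)) (Fin (d i)) k, f (muMat g) = 0)
    (Y : Matrix (Fin m → ∀ i, Fin (d i)) (Fin m → ∀ i, Fin (d i)) k)
    (hY : ∀ σ a b, Y (Tmap σ a) (Tmap σ b) = Y a b) : f Y = 0 := by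
  set c : (Fin m → ∀ i, Fin (d i)) → (Fin m → ∀ i, Fin (d i)) → k :=
    fun a b => f (Matrix.single a b 1) with hc
  have hrepf : ∀ Z : Matrix (Fin m → ∀ i, Fin (d i)) (Fin m → ∀ i, Fin (d i)) k,
      f Z = ∑ a, ∑ b, Z a b * c a b := by
    intro Z
    conv_lhs => rw [Matrix.matrix_eq_sum_single Z]
    rw [map_sum]
    refine Finset.sum_congr rfl fun a _ => ?_
    rw [map_sum]
    refine Finset.sum_congr rfl fun b _ => ?_
    have h1 : Matrix.single a b (Z a b) = Z a b • Matrix.single a b (1 : k) := by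
      rw [Matrix.smul_single, smul_eq_mul, mul_one]
    rw [h1, map_smul, smul_eq_mul]
  set cb : (Fin m → ∀ i, Fin (d i)) → (Fin m → ∀ i, Fin (d i)) → k :=
    fun a b => ∑ σ : Fin n → Equiv.Perm (Fin m), c (Tmap σ a) (Tmap σ b) with hcb
  have hmu_zero : ∀ g, (∑ a, ∑ b, muMat (m := m) g a b * c a b) = 0 := fun g => by
    rw [← hrepf]; exact hf g
  have hterm : ∀ (σ : Fin n → Equiv.Perm (Fin m)) g,
      (∑ a, ∑ b, muMat (m := m) g a b * c (Tmap σ a) (Tmap σ b)) = 0 := by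
    intro σ g
    calc (∑ a, ∑ b, muMat (m := m) g a b * c (Tmap σ a) (Tmap σ b))
        = ∑ a, ∑ b, (fun a' b' => muMat g a' b' * c a' b') (Tmap σ a) (Tmap σ b) := by
          refine Finset.sum_congr rfl fun a _ => Finset.sum_congr rfl fun b _ => ?_
          simp only [muMat_Tmap]
      _ = ∑ a, ∑ b, muMat g a b * c a b :=
          sum_Tmap_pair σ (fun a' b' => muMat g a' b' * c a' b')
      _ = 0 := hmu_zero g
  have hcb_zero : ∀ g, (∑ a, ∑ b, muMat (m := m) g a b * cb a b) = 0 := by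
    intro g
    calc (∑ a, ∑ b, muMat (m := m) g a b * cb a b)
        = ∑ a, ∑ b, ∑ σ : Fin n → Equiv.Perm (Fin m),
            muMat g a b * c (Tmap σ a) (Tmap σ b) := by
          refine Finset.sum_congr rfl fun a _ => Finset.sum_congr rfl fun b _ => ?_
          rw [hcb]; exact Finset.mul_sum _ _ _
      _ = ∑ σ : Fin n → Equiv.Perm (Fin m), ∑ a, ∑ b,
            muMat g a b * c (Tmap σ a) (Tmap σ b) :=
          triple_swap (fun a b σ => muMat g a b * c (Tmap σ a) (Tmap σ b))
      _ = 0 := by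
          rw [Finset.sum_congr rfl fun σ _ => hterm σ g, Finset.sum_const_zero]
  have hcb_inv : ∀ (τ : Fin n → Equiv.Perm (Fin m)) a b, cb (Tmap τ a) (Tmap τ b) = cb a b := by
    intro τ a b
    rw [hcb]
    calc (∑ σ : Fin n → Equiv.Perm (Fin m), c (Tmap σ (Tmap τ a)) (Tmap σ (Tmap τ b)))
        = ∑ σ : Fin n → Equiv.Perm (Fin m),
            (fun σ' => c (Tmap σ' a) (Tmap σ' b)) ((Equiv.mulRight τ) σ) := by
          refine Finset.sum_congr rfl fun σ _ => ?_
          simp only [Equiv.coe_mulRight, Tmap_mul]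
      _ = ∑ σ : Fin n → Equiv.Perm (Fin m), c (Tmap σ a) (Tmap σ b) :=
          Equiv.sum_comp (Equiv.mulRight τ) (fun σ' => c (Tmap σ' a) (Tmap σ' b))
  -- the polynomial
  set p : MvPolynomial ((i : Fin n) × (Fin (d i) × Fin (d i))) k :=
    ∑ a, ∑ b, MvPolynomial.monomial (expo a b) (cb a b) with hp
  have heval : ∀ x, MvPolynomial.eval x p = 0 := by
    intro x
    rw [hp, map_sum]
    have h3 : ∀ a, MvPolynomial.eval x (∑ b, MvPolynomial.monomial (expo a b) (cb a b))
        = ∑ b, muMat (fun i => Matrix.of fun p q => x ⟨i, (p, q)⟩) a b * cb a b := by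
      intro a
      rw [map_sum]
      refine Finset.sum_congr rfl fun b _ => ?_
      rw [MvPolynomial.eval_monomial, muMat_eq_prod_pow, mul_comm]
      congr 1
      exact Finsupp.prod_fintype _ _ fun z => pow_zero (x z)
    rw [Finset.sum_congr rfl fun a _ => h3 a]
    exact hcb_zero _
  have hp0 : p = 0 := MvPolynomial.funext fun x => by rw [heval, map_zero]
  have hcb_all : ∀ a0 b0, cb a0 b0 = 0 := by
    intro a0 b0
    have hcoef : MvPolynomial.coeff (expo a0 b0) p = 0 := by rw [hp0, MvPolynomial.coeff_zero]
    rw [hp, MvPolynomial.coeff_sum] at hcoef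
    simp only [MvPolynomial.coeff_sum, MvPolynomial.coeff_monomial] at hcoef
    have hcomb : ∀ a b, expo (m := m) (d := d) a b = expo a0 b0 → cb a b = cb a0 b0 := by
      intro a b h
      have h' : ∀ (i : Fin n) (w : Fin (d i) × Fin (d i)),
          Nat.card {j : Fin m // (a j i, b j i) = w}
            = Nat.card {j : Fin m // (a0 j i, b0 j i) = w} := by
        intro i w
        have h2 := congrArg (fun (q : ((i : Fin n) × (Fin (d i) × Fin (d i))) →₀ ℕ) =>
          q ⟨i, w⟩) h
        simpa only [expo_apply] using h2
      choose τ hτ using fun i : Fin n =>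
        exists_equiv_of_card_fibers_eq (fun j => (a j i, b j i)) (fun j => (a0 j i, b0 j i))
          (fun w => h' i w)
      have ha : a = Tmap τ a0 := by
        funext j i
        show a j i = a0 ((τ i)⁻¹ j) i
        have h1 := congrArg Prod.fst (hτ i ((τ i)⁻¹ j))
        simp only [Equiv.Perm.inv_def, Equiv.apply_symm_apply] at h1
        exact h1
      have hb : b = Tmap τ b0 := by
        funext j i
        show b j i = b0 ((τ i)⁻¹ j) i
        have h1 := congrArg Prod.snd (hτ i ((τ i)⁻¹ j))
        simp only [Equiv.Perm.inv_def, Equiv.apply_symm_apply] at h1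
        exact h1
      rw [ha, hb, hcb_inv]
    have hrw : ∀ a b, (if expo (m := m) (d := d) a b = expo a0 b0 then cb a b else 0)
        = (if expo a b = expo a0 b0 then (1:k) else 0) * cb a0 b0 := by
      intro a b
      split
      · rw [one_mul]; exact hcomb a b ‹_›
      · rw [zero_mul]
    rw [Finset.sum_congr rfl (fun a _ => Finset.sum_congr rfl fun b _ => hrw a b)] at hcoef
    simp only [← Finset.sum_mul] at hcoef
    have hcount : (∑ a, ∑ b, if expo (m := m) (d := d) a b = expo a0 b0 then (1:k) else 0) ≠ 0 := by
      have hcast : (∑ a, ∑ b, if expo (m := m) (d := d) a b = expo a0 b0 then (1:k) else 0)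
          = ((Finset.univ.filter fun ab :
              (Fin m → ∀ i, Fin (d i)) × (Fin m → ∀ i, Fin (d i)) =>
              expo ab.1 ab.2 = expo a0 b0).card : k) := by
        rw [← Finset.sum_product' (f := fun a b =>
          if expo (m := m) (d := d) a b = expo a0 b0 then (1:k) else 0), Finset.univ_product_univ,
          Finset.sum_boole]
      rw [hcast]
      have hmem : (a0, b0) ∈ (Finset.univ.filter fun ab :
          (Fin m → ∀ i, Fin (d i)) × (Fin m → ∀ i, Fin (d i)) =>
          expo ab.1 ab.2 = expo a0 b0) := by
        simp
      have hpos : 0 < (Finset.univ.filter fun ab :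
          (Fin m → ∀ i, Fin (d i)) × (Fin m → ∀ i, Fin (d i)) =>
          expo ab.1 ab.2 = expo a0 b0).card := Finset.card_pos.mpr ⟨_, hmem⟩
      exact Nat.cast_ne_zero.mpr hpos.ne'
    exact (mul_eq_zero.mp hcoef).resolve_left hcount
  -- conclude
  have hYinv : ∀ (σ : Fin n → Equiv.Perm (Fin m)),
      (∑ a, ∑ b, Y a b * c (Tmap σ a) (Tmap σ b)) = ∑ a, ∑ b, Y a b * c a b := by
    intro σ
    calc (∑ a, ∑ b, Y a b * c (Tmap σ a) (Tmap σ b))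
        = ∑ a, ∑ b, (fun a' b' => Y a' b' * c a' b') (Tmap σ a) (Tmap σ b) := by
          refine Finset.sum_congr rfl fun a _ => Finset.sum_congr rfl fun b _ => ?_
          simp only [hY]
      _ = ∑ a, ∑ b, Y a b * c a b := sum_Tmap_pair σ (fun a' b' => Y a' b' * c a' b')
  have hzero : (0:k) = (Fintype.card (Fin n → Equiv.Perm (Fin m)) : k) * f Y := by
    have h1 : (∑ a, ∑ b, Y a b * cb a b) = 0 := by
      simp only [hcb_all, mul_zero, Finset.sum_const_zero]
    calc (0:k) = ∑ a, ∑ b, Y a b * cb a b := h1.symm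
      _ = ∑ a, ∑ b, ∑ σ : Fin n → Equiv.Perm (Fin m), Y a b * c (Tmap σ a) (Tmap σ b) := by
          refine Finset.sum_congr rfl fun a _ => Finset.sum_congr rfl fun b _ => ?_
          rw [hcb]; exact Finset.mul_sum _ _ _
      _ = ∑ σ : Fin n → Equiv.Perm (Fin m), ∑ a, ∑ b, Y a b * c (Tmap σ a) (Tmap σ b) :=
          triple_swap (fun a b σ => Y a b * c (Tmap σ a) (Tmap σ b))
      _ = ∑ _σ : Fin n → Equiv.Perm (Fin m), f Y := by
          refine Finset.sum_congr rfl fun σ _ => ?_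
          rw [hYinv σ, ← hrepf]
      _ = (Fintype.card (Fin n → Equiv.Perm (Fin m)) : k) * f Y := by
          rw [Finset.sum_const, Finset.card_univ, nsmul_eq_mul]
  have hG : (Fintype.card (Fin n → Equiv.Perm (Fin m)) : k) ≠ 0 :=
    Nat.cast_ne_zero.mpr Fintype.card_ne_zero
  rcases mul_eq_zero.mp hzero.symm with h | h
  · exact absurd h hG
  · exact h

end Main

section DCT

variable {k : Type*} [Field k] [CharZero k] {n m : ℕ} {d : Fin n → ℕ}

lemma rhoMat_mul (σ τ : Fin n → Equiv.Perm (Fin m)) :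
    rhoMat (k := k) (d := d) σ * rhoMat τ = rhoMat (σ * τ) := by
  ext b a
  rw [rhoMat_mul_apply, rhoMat_apply, rhoMat_apply]
  congr 1
  simp only [eq_iff_iff]
  constructor
  · intro h
    rw [← Tmap_mul, ← h, Tmap_self_inv]
  · intro h
    rw [h, ← Tmap_mul, Tmap_inv_self]

lemma inv_mem_span (Y : Matrix (Fin m → ∀ i, Fin (d i)) (Fin m → ∀ i, Fin (d i)) k)
    (hY : ∀ σ a b, Y (Tmap σ a) (Tmap σ b) = Y a b) :
    Y ∈ Submodule.span k (Set.range (muMat (k := k) (m := m) (d := d))) := by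
  set S := Submodule.span k (Set.range (muMat (k := k) (m := m) (d := d))) with hS
  have h0 : ∀ φ : Module.Dual k (Matrix (Fin m → ∀ i, Fin (d i)) (Fin m → ∀ i, Fin (d i)) k ⧸ S),
      φ (S.mkQ Y) = 0 := by
    intro φ
    refine inv_apply_eq_zero (φ.comp S.mkQ) (fun g => ?_) Y hY
    have h1 : S.mkQ (muMat g) = 0 :=
      (Submodule.Quotient.mk_eq_zero S).mpr (Submodule.subset_span ⟨g, rfl⟩)
    rw [LinearMap.comp_apply, h1, map_zero]
  have h2 := (Module.forall_dual_apply_eq_zero_iff k (S.mkQ Y)).mp h0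
  rwa [Submodule.mkQ_apply, Submodule.Quotient.mk_eq_zero] at h2

lemma commute_of_mem_span {X Y : Matrix (Fin m → ∀ i, Fin (d i)) (Fin m → ∀ i, Fin (d i)) k}
    (H' : ∀ g, X * muMat g = muMat g * X)
    (hY : Y ∈ Submodule.span k (Set.range (muMat (k := k) (m := m) (d := d)))) :
    X * Y = Y * X := by
  induction hY using Submodule.span_induction with
  | mem x hx => obtain ⟨g, rfl⟩ := hx; exact H' g
  | zero => rw [mul_zero, zero_mul]
  | add x y _ _ hx hy => rw [mul_add, add_mul, hx, hy]
  | smul t x _ hx => rw [Matrix.mul_smul, Matrix.smul_mul, hx]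

lemma commute_of_inv {X : Matrix (Fin m → ∀ i, Fin (d i)) (Fin m → ∀ i, Fin (d i)) k}
    (H' : ∀ g, X * muMat g = muMat g * X)
    (Y : Matrix (Fin m → ∀ i, Fin (d i)) (Fin m → ∀ i, Fin (d i)) k)
    (hYc : ∀ σ, Y * rhoMat (k := k) (d := d) σ = rhoMat σ * Y) : X * Y = Y * X := by
  have hYinv : ∀ σ a b, Y (Tmap σ a) (Tmap σ b) = Y a b := by
    intro σ a b
    have h1 := congrFun (congrFun (hYc σ) (Tmap σ a)) b
    rw [mul_rhoMat_apply, rhoMat_mul_apply, Tmap_inv_self] at h1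
    exact h1
  exact commute_of_mem_span H' (inv_mem_span Y hYinv)

set_option maxHeartbeats 1000000 in
lemma mem_span_rho (X : Matrix (Fin m → ∀ i, Fin (d i)) (Fin m → ∀ i, Fin (d i)) k)
    (H' : ∀ g, X * muMat g = muMat g * X) :
    X ∈ Submodule.span k (Set.range (rhoMat (k := k) (d := d) (m := m))) := by
  set B := Submodule.span k (Set.range (rhoMat (k := k) (d := d) (m := m))) with hB
  obtain ⟨q, hq⟩ := Submodule.exists_isCompl B
  set π₀ : Matrix (Fin m → ∀ i, Fin (d i)) (Fin m → ∀ i, Fin (d i)) k →ₗ[k]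
      Matrix (Fin m → ∀ i, Fin (d i)) (Fin m → ∀ i, Fin (d i)) k :=
    B.subtype.comp (B.projectionOnto q hq) with hπ₀
  have hπ₀_mem : ∀ P, π₀ P ∈ B := fun P => ((B.projectionOnto q hq) P).2
  have hπ₀_fix : ∀ P, P ∈ B → π₀ P = P := by
    intro P hP
    calc π₀ P = ↑(B.projectionOnto q hq ((⟨P, hP⟩ : B) : Matrix _ _ k)) := rfl
      _ = ↑(⟨P, hP⟩ : B) := by rw [Submodule.projectionOnto_apply_left hq]
      _ = P := rfl
  set π : Matrix (Fin m → ∀ i, Fin (d i)) (Fin m → ∀ i, Fin (d i)) k →ₗ[k]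
      Matrix (Fin m → ∀ i, Fin (d i)) (Fin m → ∀ i, Fin (d i)) k :=
    (Fintype.card (Fin n → Equiv.Perm (Fin m)) : k)⁻¹ •
      ∑ σ : Fin n → Equiv.Perm (Fin m),
        (LinearMap.mulLeft k (rhoMat σ)).comp
          (π₀.comp (LinearMap.mulLeft k (rhoMat σ⁻¹))) with hπdef
  have hπ_apply : ∀ P, π P = (Fintype.card (Fin n → Equiv.Perm (Fin m)) : k)⁻¹ •
      ∑ σ : Fin n → Equiv.Perm (Fin m), rhoMat σ * π₀ (rhoMat σ⁻¹ * P) := by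
    intro P
    rw [hπdef]
    simp only [LinearMap.smul_apply, LinearMap.sum_apply, LinearMap.comp_apply,
      LinearMap.mulLeft_apply]
  have hcard_ne : (Fintype.card (Fin n → Equiv.Perm (Fin m)) : k) ≠ 0 :=
    Nat.cast_ne_zero.mpr Fintype.card_ne_zero
  have hBmul : ∀ (σ : Fin n → Equiv.Perm (Fin m)) Z, Z ∈ B → rhoMat σ * Z ∈ B := by
    intro σ Z hZ
    induction hZ using Submodule.span_induction with
    | mem x hx =>
        obtain ⟨τ, rfl⟩ := hx
        rw [rhoMat_mul]
        exact Submodule.subset_span ⟨σ * τ, rfl⟩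
    | zero => rw [mul_zero]; exact B.zero_mem
    | add x y _ _ hx hy => rw [mul_add]; exact B.add_mem hx hy
    | smul t x _ hx => rw [Matrix.mul_smul]; exact B.smul_mem t hx
  have hπ_mem : ∀ P, π P ∈ B := by
    intro P
    rw [hπ_apply]
    exact B.smul_mem _ (Submodule.sum_mem _ fun σ _ => hBmul σ _ (hπ₀_mem _))
  have hπ_fix : ∀ P, P ∈ B → π P = P := by
    intro P hP
    rw [hπ_apply]
    have h1 : ∀ σ : Fin n → Equiv.Perm (Fin m), rhoMat σ * π₀ (rhoMat σ⁻¹ * P) = P := by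
      intro σ
      rw [hπ₀_fix _ (hBmul σ⁻¹ P hP), ← Matrix.mul_assoc, rhoMat_mul, mul_inv_cancel,
        rhoMat_one, Matrix.one_mul]
    rw [Finset.sum_congr rfl fun σ _ => h1 σ, Finset.sum_const, Finset.card_univ,
      ← Nat.cast_smul_eq_nsmul k, smul_smul, inv_mul_cancel₀ hcard_ne, one_smul]
  have hπ_equiv : ∀ (τ : Fin n → Equiv.Perm (Fin m)) P,
      π (rhoMat τ * P) = rhoMat τ * π P := by
    intro τ P
    rw [hπ_apply, hπ_apply, Matrix.mul_smul]
    congr 1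
    rw [Finset.mul_sum]
    calc (∑ σ : Fin n → Equiv.Perm (Fin m), rhoMat σ * π₀ (rhoMat σ⁻¹ * (rhoMat τ * P)))
        = ∑ σ : Fin n → Equiv.Perm (Fin m),
            (fun σ' => rhoMat τ * (rhoMat σ' * π₀ (rhoMat σ'⁻¹ * P))) ((Equiv.mulLeft τ⁻¹) σ) := by
          refine Finset.sum_congr rfl fun σ _ => ?_
          show rhoMat σ * π₀ (rhoMat σ⁻¹ * (rhoMat τ * P))
              = rhoMat τ * (rhoMat (τ⁻¹ * σ) * π₀ (rhoMat (τ⁻¹ * σ)⁻¹ * P))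
          rw [← Matrix.mul_assoc (rhoMat σ⁻¹), rhoMat_mul, ← Matrix.mul_assoc (rhoMat τ),
            rhoMat_mul, mul_inv_cancel_left, mul_inv_rev, inv_inv]
      _ = ∑ σ : Fin n → Equiv.Perm (Fin m), rhoMat τ * (rhoMat σ * π₀ (rhoMat σ⁻¹ * P)) :=
          Equiv.sum_comp (Equiv.mulLeft τ⁻¹)
            (fun σ' => rhoMat τ * (rhoMat σ' * π₀ (rhoMat σ'⁻¹ * P)))
  -- the centralizer matrices
  set Ymat : (Fin m → ∀ i, Fin (d i)) → (Fin m → ∀ i, Fin (d i)) →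
      Matrix (Fin m → ∀ i, Fin (d i)) (Fin m → ∀ i, Fin (d i)) k :=
    fun c c' => Matrix.of fun p q' => π (Matrix.single q' c' 1) p c with hYmat
  have hcol : ∀ (P : Matrix (Fin m → ∀ i, Fin (d i)) (Fin m → ∀ i, Fin (d i)) k) p c,
      π P p c = ∑ c', ∑ q', Ymat c c' p q' * P q' c' := by
    intro P p c
    conv_lhs => rw [Matrix.matrix_eq_sum_single P]
    rw [map_sum, Matrix.sum_apply]
    have h1 : ∀ q', π (∑ c', Matrix.single q' c' (P q' c')) p c
        = ∑ c', P q' c' * Ymat c c' p q' := by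
      intro q'
      rw [map_sum, Matrix.sum_apply]
      refine Finset.sum_congr rfl fun c' _ => ?_
      have h2 : Matrix.single q' c' (P q' c')
          = P q' c' • Matrix.single q' c' (1 : k) := by
        rw [Matrix.smul_single, smul_eq_mul, mul_one]
      rw [h2, map_smul, Matrix.smul_apply, smul_eq_mul]
      rfl
    rw [Finset.sum_congr rfl fun q' _ => h1 q', Finset.sum_comm]
    exact Finset.sum_congr rfl fun c' _ => Finset.sum_congr rfl fun q' _ => mul_comm _ _
  have hYcomm : ∀ c c' σ, Ymat c c' * rhoMat σ = rhoMat σ * Ymat c c' := by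
    intro c c' σ
    ext p q'
    rw [mul_rhoMat_apply, rhoMat_mul_apply]
    show π (Matrix.single (Tmap σ q') c' 1) p c
        = π (Matrix.single q' c' 1) (Tmap σ⁻¹ p) c
    have h1 : rhoMat σ * Matrix.single q' c' (1 : k)
        = Matrix.single (Tmap σ q') c' 1 := by
      ext b a
      rw [rhoMat_mul_apply]
      show (if q' = Tmap σ⁻¹ b ∧ c' = a then (1:k) else 0)
          = if Tmap σ q' = b ∧ c' = a then 1 else 0
      congr 1
      simp only [eq_iff_iff, and_congr_left_iff]
      intro _
      constructor
      · rintro rfl; rw [Tmap_self_inv]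
      · rintro rfl; rw [Tmap_inv_self]
    have h2 := hπ_equiv σ (Matrix.single q' c' 1)
    rw [h1] at h2
    have h3 := congrFun (congrFun h2 p) c
    rw [h3, rhoMat_mul_apply]
  have hXY : ∀ c c', X * Ymat c c' = Ymat c c' * X :=
    fun c c' => commute_of_inv H' (Ymat c c') (fun σ => hYcomm c c' σ)
  have h1B : (1 : Matrix (Fin m → ∀ i, Fin (d i)) (Fin m → ∀ i, Fin (d i)) k) ∈ B := by
    rw [← rhoMat_one (k := k) (d := d) (m := m)]
    exact Submodule.subset_span ⟨1, rfl⟩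
  have hone : ∀ q' c, (∑ c', Ymat c c' q' c') =
      (1 : Matrix (Fin m → ∀ i, Fin (d i)) (Fin m → ∀ i, Fin (d i)) k) q' c := by
    intro q' c
    have h2 := hcol 1 q' c
    rw [hπ_fix 1 h1B] at h2
    have h3 : ∀ c', (∑ r, Ymat c c' q' r *
        (1 : Matrix (Fin m → ∀ i, Fin (d i)) (Fin m → ∀ i, Fin (d i)) k) r c')
        = Ymat c c' q' c' := by
      intro c'
      simp only [Matrix.one_apply, mul_ite, mul_one, mul_zero]
      rw [Finset.sum_ite_eq' Finset.univ c' (fun r => Ymat c c' q' r)]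
      simp
    rw [Finset.sum_congr rfl fun c' _ => h3 c'] at h2
    exact h2.symm
  have hfix : π X = X := by
    ext p c
    rw [hcol X p c]
    have step1 : ∀ c', (∑ q', Ymat c c' p q' * X q' c') = (X * Ymat c c') p c' := by
      intro c'
      rw [hXY c c', Matrix.mul_apply]
    rw [Finset.sum_congr rfl fun c' _ => step1 c',
      Finset.sum_congr rfl fun c' _ => (Matrix.mul_apply (M := X) (N := Ymat c c')),
      Finset.sum_comm,
      Finset.sum_congr rfl fun q' _ => (Finset.mul_sum _ _ _).symm,
      Finset.sum_congr rfl fun q' _ => by rw [hone q' c]]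
    rw [← Matrix.mul_apply, Matrix.mul_one]
  rw [← hfix]
  exact hπ_mem X

end DCT


/-- The centralizer algebra of the image of the local group
`GL_d = GL(V₁)×⋯×GL(Vₙ)` acting on `V^{⊗m}` via `μ` equals the linear span of the image of
`(S_m)ⁿ` acting via `ρ`. -/
theorem stmt_7 {k : Type*} [Field k] [IsAlgClosed k] [CharZero k] {n m : ℕ}
    (d : Fin n → ℕ) (X : Matrix (Fin m → ∀ i, Fin (d i)) (Fin m → ∀ i, Fin (d i)) k) :
    (∀ g : ∀ i, Matrix (Fin (d i)) (Fin (d i)) k, (∀ i, IsUnit (g i)) →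
      X * muMat g = muMat g * X) ↔
    X ∈ Submodule.span k
      (Set.range (rhoMat (k := k) (d := d) (m := m) : (Fin n → Equiv.Perm (Fin m)) → _)) := by
  constructor
  · intro H
    exact mem_span_rho X (commute_muMat_of_units H)
  · intro hX g _
    induction hX using Submodule.span_induction with
    | mem Y hY =>
        obtain ⟨σ, rfl⟩ := hY
        exact rho_mul_mu σ g
    | zero => rw [zero_mul, mul_zero]
    | add x y _ _ hx hy => rw [add_mul, mul_add, hx, hy]
    | smul t x _ hx => rw [Matrix.smul_mul, Matrix.mul_smul, hx]
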